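/- Let (α, N, B, κ_g, τ_g) be a Frenet apparatus of a timelike unit speed non-geodesic curve in S³₁ and let p ∈ S³₁ (so ⟨p,p⟩ = 1). Suppose there exist constants n₁, n₂, n ∈ ℝ with n₁² − n₂² + n² = 1 such that for all s ∈ ℝ: ⟨p, α'(s)⟩ = n₁·sinh(s) + n₂·cosh(s) and ⟨p, N(s)⟩² + ⟨p, B(s)⟩² = n². Then ⟨p, N(s)⟩ = 0 for all s ∈ ℝ, i.e., α is a timelike rectifying curve with respect to p. -/

import Mathlib

open Real

/-- The Minkowski scalar product on `ℝ⁴₁`: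
`⟨x,y⟩ = -x₁y₁ + x₂y₂ + x₃y₃ + x₄y₄`. -/
noncomputable def mdot (x y : Fin 4 → ℝ) : ℝ :=
  -(x 0 * y 0) + x 1 * y 1 + x 2 * y 2 + x 3 * y 3

open Matrix

set_option maxHeartbeats 1000000

lemma mdot_comm (x y : Fin 4 → ℝ) : mdot x y = mdot y x := by unfold mdot; ring
lemma mdot_sub_right (x y z : Fin 4 → ℝ) : mdot x (y - z) = mdot x y - mdot x z := by
  simp [mdot, Pi.sub_apply]; ring
lemma mdot_add_right (x y z : Fin 4 → ℝ) : mdot x (y + z) = mdot x y + mdot x z := by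
  simp [mdot, Pi.add_apply]; ring
lemma mdot_smul_right (c : ℝ) (x y : Fin 4 → ℝ) : mdot x (c • y) = c * mdot x y := by
  simp [mdot, Pi.smul_apply, smul_eq_mul]; ring
lemma mdot_sub_left (x y z : Fin 4 → ℝ) : mdot (y - z) x = mdot y x - mdot z x := by
  simp [mdot, Pi.sub_apply]; ring
lemma mdot_add_left (x y z : Fin 4 → ℝ) : mdot (y + z) x = mdot y x + mdot z x := by
  simp [mdot, Pi.add_apply]; ring
lemma mdot_smul_left (c : ℝ) (x y : Fin 4 → ℝ) : mdot (c • y) x = c * mdot y x := by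
  simp [mdot, Pi.smul_apply, smul_eq_mul]; ring

lemma mdot_expansion (u T N B p : Fin 4 → ℝ)
    (huu : mdot u u = 1) (hTT : mdot T T = -1) (hNN : mdot N N = 1) (hBB : mdot B B = 1)
    (huT : mdot u T = 0) (huN : mdot u N = 0) (huB : mdot u B = 0)
    (hTN : mdot T N = 0) (hTB : mdot T B = 0) (hNB : mdot N B = 0) :
    mdot p p = (mdot p u)^2 - (mdot p T)^2 + (mdot p N)^2 + (mdot p B)^2 := by
  set M : Matrix (Fin 4) (Fin 4) ℝ := Matrix.of ![u, T, N, B] with hM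
  set η : Matrix (Fin 4) (Fin 4) ℝ := Matrix.diagonal ![-1, 1, 1, 1] with hη
  have hMG : M * η * Mᵀ = Matrix.diagonal ![1, -1, 1, 1] := by
    ext i j
    fin_cases i <;> fin_cases j <;>
      simp only [hM, hη, Matrix.mul_apply, Matrix.diagonal_apply, Matrix.transpose_apply,
        Fin.sum_univ_four, Matrix.of_apply, Matrix.cons_val_zero, Matrix.cons_val_one,
        Matrix.head_cons, Matrix.cons_val_two, Matrix.tail_cons, Matrix.cons_val_three,
        Fin.zero_eta, Fin.mk_one, Fin.reduceFinMk, Fin.reduceEq, if_true, if_false, reduceIte] <;>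
      simp only [mdot] at huu hTT hNN hBB huT huN huB hTN hTB hNB <;>
      first
        | linear_combination huu | linear_combination hTT | linear_combination hNN
        | linear_combination hBB | linear_combination huT | linear_combination huN
        | linear_combination huB | linear_combination hTN | linear_combination hTB
        | linear_combination hNB | ring
  have hdetM : IsUnit M.det := by
    have h1 := congrArg Matrix.det hMG
    rw [Matrix.det_mul, Matrix.det_mul, Matrix.det_transpose, hη, Matrix.det_diagonal,
      Matrix.det_diagonal, Fin.prod_univ_four, Fin.prod_univ_four] at h1
    simp only [Matrix.cons_val_zero, Matrix.cons_val_one, Matrix.head_cons, Matrix.cons_val_two,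
      Matrix.tail_cons, Matrix.cons_val_three] at h1
    refine isUnit_iff_ne_zero.mpr (fun h => ?_)
    rw [h] at h1; norm_num at h1
  set a := mdot p u with ha
  set t := mdot p T with ht
  set f := mdot p N with hf
  set b := mdot p B with hb
  set q : Fin 4 → ℝ := p - (a • u - t • T + f • N + b • B) with hq
  have hMq : M *ᵥ (η *ᵥ q) = 0 := by
    have key : ∀ v : Fin 4 → ℝ, mdot v q = 0 → False ∨ True := fun _ _ => Or.inr trivial
    have h0 : mdot u q = 0 := by
      rw [hq, mdot_sub_right, mdot_add_right, mdot_add_right, mdot_sub_right,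
        mdot_smul_right, mdot_smul_right, mdot_smul_right, mdot_smul_right,
        huu, huT, huN, huB, mdot_comm u p, ← ha]; ring
    have h1 : mdot T q = 0 := by
      rw [hq, mdot_sub_right, mdot_add_right, mdot_add_right, mdot_sub_right,
        mdot_smul_right, mdot_smul_right, mdot_smul_right, mdot_smul_right,
        mdot_comm T u, huT, hTT, hTN, hTB, mdot_comm T p, ← ht]; ring
    have h2 : mdot N q = 0 := by
      rw [hq, mdot_sub_right, mdot_add_right, mdot_add_right, mdot_sub_right,
        mdot_smul_right, mdot_smul_right, mdot_smul_right, mdot_smul_right,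
        mdot_comm N u, huN, mdot_comm N T, hTN, hNN, hNB, mdot_comm N p, ← hf]; ring
    have h3 : mdot B q = 0 := by
      rw [hq, mdot_sub_right, mdot_add_right, mdot_add_right, mdot_sub_right,
        mdot_smul_right, mdot_smul_right, mdot_smul_right, mdot_smul_right,
        mdot_comm B u, huB, mdot_comm B T, hTB, mdot_comm B N, hNB, hBB, mdot_comm B p, ← hb]; ring
    funext i
    have hrow : (M *ᵥ (η *ᵥ q)) i = mdot (M i) q := by
      simp [Matrix.mulVec, dotProduct, Fin.sum_univ_four, hη, Matrix.diagonal, mdot]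
      try ring
    rw [hrow]
    have hsimp : ∀ i : Fin 4, (Matrix.of ![u, T, N, B]) i = ![u, T, N, B] i := fun _ => rfl
    fin_cases i <;>
      simp only [hM, hsimp, Fin.zero_eta, Fin.mk_one, Fin.reduceFinMk,
        Matrix.cons_val_zero, Matrix.cons_val_one, Matrix.head_cons, Matrix.cons_val_two,
        Matrix.tail_cons, Matrix.cons_val_three, Pi.zero_apply] <;>
      first | exact h0 | exact h1 | exact h2 | exact h3
  have hηq : η *ᵥ q = 0 := by
    calc η *ᵥ q = (M⁻¹ * M) *ᵥ (η *ᵥ q) := by rw [Matrix.nonsing_inv_mul M hdetM, Matrix.one_mulVec]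
    _ = M⁻¹ *ᵥ (M *ᵥ (η *ᵥ q)) := by rw [← Matrix.mulVec_mulVec]
    _ = 0 := by rw [hMq, Matrix.mulVec_zero]
  have hηη : η * η = 1 := by
    rw [hη, Matrix.diagonal_mul_diagonal]
    have hone : (fun i => ![(-1:ℝ),1,1,1] i * ![-1,1,1,1] i) = (1 : Fin 4 → ℝ) := by
      funext i
      fin_cases i <;> norm_num [Fin.zero_eta, Fin.mk_one, Fin.reduceFinMk]
    rw [hone]; exact Matrix.diagonal_one
  have hq0 : q = 0 := by
    calc q = (η * η) *ᵥ q := by rw [hηη, Matrix.one_mulVec]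
    _ = η *ᵥ (η *ᵥ q) := by rw [Matrix.mulVec_mulVec]
    _ = 0 := by rw [hηq, Matrix.mulVec_zero]
  have hpw : p = a • u - t • T + f • N + b • B := by
    have := sub_eq_zero.mp (hq ▸ hq0 : p - (a • u - t • T + f • N + b • B) = 0)
    exact this
  conv_lhs => rw [hpw]
  simp only [mdot_add_left, mdot_sub_left, mdot_smul_left, mdot_add_right, mdot_sub_right,
    mdot_smul_right, mdot_comm T u, mdot_comm N u, mdot_comm B u, mdot_comm N T, mdot_comm B T,
    mdot_comm B N, huu, hTT, hNN, hBB, huT, huN, huB, hTN, hTB, hNB]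
  ring

lemma hasDerivAt_mdot_const {y : ℝ → Fin 4 → ℝ} {y' : Fin 4 → ℝ} {s : ℝ} (p : Fin 4 → ℝ)
    (hy : HasDerivAt y y' s) :
    HasDerivAt (fun s => mdot p (y s)) (mdot p y') s := by
  have h := hasDerivAt_pi.1 hy
  have H := ((((h 0).const_mul (p 0)).neg.add ((h 1).const_mul (p 1))).add
      ((h 2).const_mul (p 2))).add ((h 3).const_mul (p 3))
  simp only [mdot]; exact H

/-- If `⟨p, T(s)⟩ = n₁ sinh s + n₂ cosh s` and `⟨p,N⟩² + ⟨p,B⟩² = n²` with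
`n₁² - n₂² + n² = 1` along a timelike unit speed non-geodesic curve in `S³₁`,
then the curve is a timelike rectifying curve with respect to `p`. -/
theorem rectifying_of_tangent_component
    (α N B : ℝ → Fin 4 → ℝ) (κg τg : ℝ → ℝ)
    (hαsm : ContDiff ℝ (⊤ : ℕ∞) α) (hNsm : ContDiff ℝ (⊤ : ℕ∞) N)
    (hBsm : ContDiff ℝ (⊤ : ℕ∞) B)
    (hκsm : ContDiff ℝ (⊤ : ℕ∞) κg) (hτsm : ContDiff ℝ (⊤ : ℕ∞) τg)
    (hκpos : ∀ s, 0 < κg s)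
    (hα1 : ∀ s, mdot (α s) (α s) = 1)
    (hT1 : ∀ s, mdot (deriv α s) (deriv α s) = -1)
    (hN1 : ∀ s, mdot (N s) (N s) = 1)
    (hB1 : ∀ s, mdot (B s) (B s) = 1)
    (hαT : ∀ s, mdot (α s) (deriv α s) = 0)
    (hαN : ∀ s, mdot (α s) (N s) = 0)
    (hαB : ∀ s, mdot (α s) (B s) = 0)
    (hTN : ∀ s, mdot (deriv α s) (N s) = 0)
    (hTB : ∀ s, mdot (deriv α s) (B s) = 0)
    (hNB : ∀ s, mdot (N s) (B s) = 0)
    (hF1 : ∀ s, deriv (deriv α) s = α s + κg s • N s)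
    (hF2 : ∀ s, deriv N s = κg s • deriv α s + τg s • B s)
    (hF3 : ∀ s, deriv B s = -τg s • N s)
    (p : Fin 4 → ℝ) (hp : mdot p p = 1)
    (n₁ n₂ n : ℝ) (hn : n₁ ^ 2 - n₂ ^ 2 + n ^ 2 = 1)
    (htan : ∀ s, mdot p (deriv α s) = n₁ * Real.sinh s + n₂ * Real.cosh s)
    (hperp : ∀ s, (mdot p (N s)) ^ 2 + (mdot p (B s)) ^ 2 = n ^ 2) :
    ∀ s, mdot p (N s) = 0 := by
  have hαd : Differentiable ℝ α := hαsm.differentiable (by simp)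
  have hTd : Differentiable ℝ (deriv α) :=
    ((contDiff_infty_iff_deriv.mp hαsm).2).differentiable (by simp)
  have hNd : Differentiable ℝ N := hNsm.differentiable (by simp)
  have hBd : Differentiable ℝ B := hBsm.differentiable (by simp)
  have hderivT : ∀ s, HasDerivAt (fun s => mdot p (deriv α s))
      (mdot p (α s) + κg s * mdot p (N s)) s := by
    intro s
    have h := hasDerivAt_mdot_const p (hTd s).hasDerivAt
    rw [hF1 s, mdot_add_right, mdot_smul_right] at h
    exact h
  have hderiva : ∀ s, HasDerivAt (fun s => mdot p (α s)) (mdot p (deriv α s)) s :=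
    fun s => hasDerivAt_mdot_const p (hαd s).hasDerivAt
  have hderivf : ∀ s, HasDerivAt (fun s => mdot p (N s))
      (κg s * mdot p (deriv α s) + τg s * mdot p (B s)) s := by
    intro s
    have h := hasDerivAt_mdot_const p (hNd s).hasDerivAt
    rw [hF2 s, mdot_add_right, mdot_smul_right, mdot_smul_right] at h
    exact h
  have hderivb : ∀ s, HasDerivAt (fun s => mdot p (B s)) (-τg s * mdot p (N s)) s := by
    intro s
    have h := hasDerivAt_mdot_const p (hBd s).hasDerivAt
    rw [hF3 s, mdot_smul_right] at h
    exact h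
  have e1 : ∀ s, mdot p (α s) + κg s * mdot p (N s)
      = n₁ * Real.cosh s + n₂ * Real.sinh s := by
    intro s
    have h2 : HasDerivAt (fun s => mdot p (deriv α s))
        (n₁ * Real.cosh s + n₂ * Real.sinh s) s := by
      have hfe : (fun s => mdot p (deriv α s))
          = fun s => n₁ * Real.sinh s + n₂ * Real.cosh s := funext htan
      rw [hfe]
      exact ((Real.hasDerivAt_sinh s).const_mul n₁).add
        ((Real.hasDerivAt_cosh s).const_mul n₂)
    exact (hderivT s).unique h2
  have e2 : ∀ s, mdot p (N s) * mdot p (deriv α s) = 0 := by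
    intro s
    have hC : HasDerivAt (fun s => mdot p (N s) * mdot p (N s) + mdot p (B s) * mdot p (B s))
        ((κg s * mdot p (deriv α s) + τg s * mdot p (B s)) * mdot p (N s)
          + mdot p (N s) * (κg s * mdot p (deriv α s) + τg s * mdot p (B s))
          + ((-τg s * mdot p (N s)) * mdot p (B s)
            + mdot p (B s) * (-τg s * mdot p (N s)))) s :=
      ((hderivf s).mul (hderivf s)).add ((hderivb s).mul (hderivb s))
    have hconst : (fun s => mdot p (N s) * mdot p (N s) + mdot p (B s) * mdot p (B s))
        = fun _ => n ^ 2 := by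
      funext u
      linear_combination hperp u
    rw [hconst] at hC
    have hD0 := hC.unique (hasDerivAt_const s (n ^ 2))
    have hft : κg s * (mdot p (N s) * mdot p (deriv α s)) = 0 := by
      linear_combination hD0 / 2
    exact (mul_eq_zero.mp hft).resolve_left (hκpos s).ne'
  have hgc : ∀ s, mdot p (α s) - (n₁ * Real.cosh s + n₂ * Real.sinh s)
      = mdot p (α 0) - (n₁ * Real.cosh 0 + n₂ * Real.sinh 0) := by
    have hg : ∀ s, HasDerivAt
        (fun s => mdot p (α s) - (n₁ * Real.cosh s + n₂ * Real.sinh s)) 0 s := by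
      intro s
      have h := (hderiva s).sub (((Real.hasDerivAt_cosh s).const_mul n₁).add
        ((Real.hasDerivAt_sinh s).const_mul n₂))
      have hv : mdot p (deriv α s) - (n₁ * Real.sinh s + n₂ * Real.cosh s) = 0 := by
        rw [htan s]; ring
      rwa [hv] at h
    intro s
    exact is_const_of_deriv_eq_zero (fun x => (hg x).differentiableAt)
      (fun x => (hg x).deriv) s 0
  have hcf : ∀ s, κg s * mdot p (N s) = κg 0 * mdot p (N 0) := by
    intro s
    linear_combination e1 s - e1 0 - hgc s
  intro s
  by_cases hC : κg 0 * mdot p (N 0) = 0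
  · have h := hcf s
    rw [hC] at h
    exact (mul_eq_zero.mp h).resolve_left (hκpos s).ne'
  · exfalso
    have hf0 : ∀ u, mdot p (N u) ≠ 0 := by
      intro u h
      exact hC (by rw [← hcf u, h, mul_zero])
    have ht0 : ∀ u, mdot p (deriv α u) = 0 := fun u =>
      (mul_eq_zero.mp (e2 u)).resolve_left (hf0 u)
    have hn2 : n₂ = 0 := by
      have h := htan 0
      rw [ht0 0] at h
      simpa [Real.sinh_zero, Real.cosh_zero] using h.symm
    have hn1 : n₁ = 0 := by
      have h := htan 1
      rw [ht0 1, hn2] at h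
      have hs : Real.sinh 1 ≠ 0 := ne_of_gt (by positivity)
      have h2 := h.symm
      simp only [zero_mul, add_zero] at h2
      exact (mul_eq_zero.mp h2).resolve_right hs
    have hexp := mdot_expansion (α 0) (deriv α 0) (N 0) (B 0) p
      (hα1 0) (hT1 0) (hN1 0) (hB1 0) (hαT 0) (hαN 0) (hαB 0) (hTN 0) (hTB 0) (hNB 0)
    rw [hp, ht0 0] at hexp
    have hnn : n ^ 2 = 1 := by
      rw [hn1, hn2] at hn; linarith
    have hp0 := hperp 0
    rw [hnn] at hp0
    have ha0 : mdot p (α 0) = 0 := by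
      have h2 : (mdot p (α 0)) ^ 2 = 0 := by nlinarith [hexp, hp0]
      exact pow_eq_zero_iff (n := 2) (by norm_num) |>.mp h2
    have he10 := e1 0
    rw [hn1, hn2, ha0] at he10
    simp only [zero_mul, add_zero, zero_add] at he10
    exact hC he10
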